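/- Let A ∈ ℝ^{n×n} with μ₂(A) < 0 and B ∈ ℝ^{n×s}. Assume 𝒱 ∈ ℝ^{n×q} and V₊ ∈ ℝ^{n×d} satisfy 𝒱ᵀ𝒱 = I_q, V₊ᵀV₊ = I_d, 𝒱ᵀV₊ = 0, the Arnoldi relation A𝒱 = 𝒱𝒯 + V₊ T₊ Eᵀ with 𝒯 = 𝒱ᵀA𝒱, T₊ ∈ ℝ^{d×d} and E ∈ ℝ^{q×d} the last d columns of I_q, and B = 𝒱 B_m with B_m = 𝒱ᵀB. Let G : ℝ → ℝ^{q×q} be continuously differentiable with G(t) symmetric for all t, Ġ(t) = 𝒯 G(t) + G(t) 𝒯ᵀ + B_m B_mᵀ and G(t₀) = 0; set X_m(t) = 𝒱 G(t) 𝒱ᵀ. Let X : ℝ → ℝ^{n×n} be differentiable with Ẋ(t) = A X(t) + X(t) Aᵀ + B Bᵀ and X(t₀) = 0. Then for all t ∈ [t₀,T_f]: ‖X(t) − X_m(t)‖ ≤ ‖T₊‖ · ( sup_{τ ∈ [t₀,t]} ‖Ḡ(τ)‖ ) · ( e^{2(t−t₀)μ₂(A)} − 1 ) / ( 2 μ₂(A)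 ), where Ḡ(τ) = Eᵀ G(τ) is the matrix of the last d rows of G(τ). -/

import Mathlib

open Matrix Set
open scoped Matrix.Norms.L2Operator
open scoped RealInnerProductSpace

/-- The 2-logarithmic norm `μ₂(M) = (1/2)·λ_max(M + Mᵀ)` of a real square matrix: half the
largest eigenvalue of the symmetric matrix `M + Mᵀ`. -/
noncomputable def mu2 {k : ℕ} (M : Matrix (Fin k) (Fin k) ℝ) : ℝ :=
  (1 / 2) * ⨆ i, (show (M + Mᵀ).IsHermitian by
    simpa [Matrix.conjTranspose_eq_transpose_of_trivial] using
      Matrix.isHermitian_add_transpose_self M).eigenvalues i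

set_option linter.unusedVariables false

lemma eig_iSup_congr {k : ℕ} {M N : Matrix (Fin k) (Fin k) ℝ} (h : M = N)
    (hM : M.IsHermitian) (hN : N.IsHermitian) :
    (⨆ i, hM.eigenvalues i) = ⨆ i, hN.eigenvalues i := by subst h; rfl

lemma mu2_transpose {k : ℕ} (M : Matrix (Fin k) (Fin k) ℝ) : mu2 Mᵀ = mu2 M := by
  unfold mu2
  congr 1
  exact eig_iSup_congr (by rw [Matrix.transpose_transpose, add_comm]) _ _

noncomputable def lmulCLM {a b c : ℕ} (L : Matrix (Fin a) (Fin b) ℝ) :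
    Matrix (Fin b) (Fin c) ℝ →L[ℝ] Matrix (Fin a) (Fin c) ℝ :=
  LinearMap.toContinuousLinearMap
    { toFun := fun M => L * M
      map_add' := fun M N => by simp [Matrix.mul_add]
      map_smul' := fun r M => by simp [Matrix.mul_smul] }

@[simp] lemma lmulCLM_apply {a b c : ℕ} (L : Matrix (Fin a) (Fin b) ℝ)
    (M : Matrix (Fin b) (Fin c) ℝ) : lmulCLM L M = L * M := rfl

lemma rayleigh {k : ℕ} (M : Matrix (Fin k) (Fin k) ℝ) (x : Fin k → ℝ) :
    x ⬝ᵥ ((M + Mᵀ) *ᵥ x) ≤ (2 * mu2 M) * (x ⬝ᵥ x) := by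
  rcases Nat.eq_zero_or_pos k with hk0 | hk
  · subst hk0
    simp [dotProduct]
  haveI : Nonempty (Fin k) := Fin.pos_iff_nonempty.mp hk
  have hS : (M + Mᵀ).IsHermitian := by
    simpa [Matrix.conjTranspose_eq_transpose_of_trivial] using
      Matrix.isHermitian_add_transpose_self M
  have hμ : 2 * mu2 M = ⨆ i, hS.eigenvalues i := by rw [mu2]; ring
  rw [hμ]
  set c := ⨆ i, hS.eigenvalues i with hc
  set U : Matrix (Fin k) (Fin k) ℝ := (hS.eigenvectorUnitary : Matrix (Fin k) (Fin k) ℝ) with hU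
  have hUU : U * Uᵀ = 1 := by
    have := (Matrix.mem_unitaryGroup_iff).mp hS.eigenvectorUnitary.2
    simpa [Matrix.star_eq_conjTranspose,
      Matrix.conjTranspose_eq_transpose_of_trivial] using this
  have hstar : star U = Uᵀ := by
    simp [Matrix.star_eq_conjTranspose, Matrix.conjTranspose_eq_transpose_of_trivial]
  set y := Uᵀ *ᵥ x with hy
  have hdot : ∀ z : Fin k → ℝ, x ⬝ᵥ (U *ᵥ z) = y ⬝ᵥ z := by
    intro z
    rw [Matrix.dotProduct_mulVec, hy, Matrix.mulVec_transpose]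
  have hspec : M + Mᵀ = U * Matrix.diagonal hS.eigenvalues * Uᵀ := by
    have := hS.spectral_theorem
    simpa [hstar, Function.comp, ← hU] using this
  have h1 : x ⬝ᵥ ((M + Mᵀ) *ᵥ x) = y ⬝ᵥ (Matrix.diagonal hS.eigenvalues *ᵥ y) := by
    conv_lhs => rw [hspec]
    rw [← Matrix.mulVec_mulVec, ← Matrix.mulVec_mulVec, hdot]
  have h2 : y ⬝ᵥ (Matrix.diagonal hS.eigenvalues *ᵥ y) = ∑ i, hS.eigenvalues i * (y i * y i) := by
    simp [dotProduct, Matrix.mulVec_diagonal, mul_comm, mul_left_comm, mul_assoc]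
  have h3 : y ⬝ᵥ y = x ⬝ᵥ x := by
    have : y ⬝ᵥ y = x ⬝ᵥ ((U * Uᵀ) *ᵥ x) := by
      rw [← Matrix.mulVec_mulVec, hdot]
    simp [this, hUU]
  have hb : BddAbove (Set.range hS.eigenvalues) := Set.Finite.bddAbove (Set.finite_range _)
  calc x ⬝ᵥ ((M + Mᵀ) *ᵥ x) = ∑ i, hS.eigenvalues i * (y i * y i) := by rw [h1, h2]
    _ ≤ ∑ i, c * (y i * y i) := by
        refine Finset.sum_le_sum fun i _ => ?_
        exact mul_le_mul_of_nonneg_right (le_ciSup hb i) (mul_self_nonneg _)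
    _ = c * (y ⬝ᵥ y) := by rw [← Finset.mul_sum]; rfl
    _ = c * (x ⬝ᵥ x) := by rw [h3]

noncomputable abbrev toE {k : ℕ} (v : Fin k → ℝ) : EuclideanSpace ℝ (Fin k) :=
  (WithLp.equiv 2 (Fin k → ℝ)).symm v

/-- mulVec by a fixed vector as a continuous linear map in the matrix. -/
noncomputable def mulVecCLM {k : ℕ} (x : Fin k → ℝ) :
    Matrix (Fin k) (Fin k) ℝ →L[ℝ] EuclideanSpace ℝ (Fin k) :=
  LinearMap.toContinuousLinearMap
    { toFun := fun M => toE (M *ᵥ x)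
      map_add' := fun M N => by simp [Matrix.add_mulVec, toE]
      map_smul' := fun r M => by simp [Matrix.smul_mulVec, toE] }

@[simp] lemma mulVecCLM_apply {k : ℕ} (x : Fin k → ℝ) (M : Matrix (Fin k) (Fin k) ℝ) :
    mulVecCLM x M = toE (M *ᵥ x) := rfl

lemma toE_dotProduct {k : ℕ} (u v : Fin k → ℝ) : (inner ℝ (toE u) (toE v) : ℝ) = u ⬝ᵥ v := by
  simp [PiLp.inner_apply, dotProduct, RCLike.inner_apply, mul_comm]

lemma toE_norm_sq {k : ℕ} (v : Fin k → ℝ) : ‖toE v‖ ^ 2 = v ⬝ᵥ v := by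
  rw [← real_inner_self_eq_norm_sq, toE_dotProduct]

lemma norm_mulVec_le {m k : ℕ} (M : Matrix (Fin m) (Fin k) ℝ) (x : Fin k → ℝ) :
    ‖toE (M *ᵥ x)‖ ≤ ‖M‖ * ‖toE x‖ := by
  simpa [toE] using Matrix.l2_opNorm_mulVec M (toE x)

lemma opNorm_le_of {m k : ℕ} (M : Matrix (Fin m) (Fin k) ℝ) {c : ℝ} (hc : 0 ≤ c)
    (h : ∀ x : Fin k → ℝ, ‖toE (M *ᵥ x)‖ ≤ c * ‖toE x‖) : ‖M‖ ≤ c := by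
  rw [Matrix.l2_opNorm_def]
  refine ContinuousLinearMap.opNorm_le_bound _ hc fun x => ?_
  exact h ((WithLp.equiv 2 (Fin k → ℝ)) x)



lemma dot_sym {k : ℕ} (M : Matrix (Fin k) (Fin k) ℝ) (z : Fin k → ℝ) :
    z ⬝ᵥ (M *ᵥ z) + (M *ᵥ z) ⬝ᵥ z = z ⬝ᵥ ((M + Mᵀ) *ᵥ z) := by
  rw [Matrix.add_mulVec, dotProduct_add]
  congr 1
  rw [Matrix.dotProduct_mulVec (w := z), Matrix.vecMul_transpose]

lemma norm_exp_le {k : ℕ} (M : Matrix (Fin k) (Fin k) ℝ) {s : ℝ} (hs : 0 ≤ s) :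
    ‖NormedSpace.exp (s • M)‖ ≤ Real.exp (mu2 M * s) := by
  set μ := mu2 M with hμdef
  refine opNorm_le_of _ (Real.exp_nonneg _) fun x => ?_
  set y : ℝ → EuclideanSpace ℝ (Fin k) := fun u => mulVecCLM x (NormedSpace.exp (u • M))
    with hydef
  have hy' : ∀ u, HasDerivAt y (mulVecCLM x (M * NormedSpace.exp (u • M))) u := fun u =>
    ((mulVecCLM x).hasFDerivAt).comp_hasDerivAt u (hasDerivAt_exp_smul_const' M u)
  set g : ℝ → ℝ := fun u => Real.exp (-(2 * μ) * u) * (inner ℝ (y u) (y u) : ℝ) with hgdef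
  have hginner : ∀ u, HasDerivAt (fun v => (inner ℝ (y v) (y v) : ℝ))
      ((inner ℝ (y u) (mulVecCLM x (M * NormedSpace.exp (u • M))) : ℝ)
        + inner ℝ (mulVecCLM x (M * NormedSpace.exp (u • M))) (y u)) u := fun u =>
    HasDerivAt.inner (𝕜 := ℝ) (hy' u) (hy' u)
  have hgexp : ∀ u : ℝ, HasDerivAt (fun v : ℝ => Real.exp (-(2 * μ) * v))
      (Real.exp (-(2 * μ) * u) * (-(2 * μ))) u := fun u => by
    simpa [mul_comm] using ((hasDerivAt_id u).const_mul (-(2 * μ))).exp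
  have hg' : ∀ u, HasDerivAt g
      (Real.exp (-(2 * μ) * u) * (-(2 * μ)) * (inner ℝ (y u) (y u) : ℝ)
        + Real.exp (-(2 * μ) * u) *
          ((inner ℝ (y u) (mulVecCLM x (M * NormedSpace.exp (u • M))) : ℝ)
            + inner ℝ (mulVecCLM x (M * NormedSpace.exp (u • M))) (y u))) u := fun u =>
    (hgexp u).mul (hginner u)
  have hgmono : ∀ u, deriv g u ≤ 0 := by
    intro u
    rw [(hg' u).deriv]
    set z : Fin k → ℝ := NormedSpace.exp (u • M) *ᵥ x with hz
    have hyz : y u = toE z := rfl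
    have h1 : mulVecCLM x (M * NormedSpace.exp (u • M)) = toE (M *ᵥ z) := by
      rw [mulVecCLM_apply, ← Matrix.mulVec_mulVec]
    have hsum : (inner ℝ (y u) (mulVecCLM x (M * NormedSpace.exp (u • M))) : ℝ)
        + inner ℝ (mulVecCLM x (M * NormedSpace.exp (u • M))) (y u)
        = z ⬝ᵥ ((M + Mᵀ) *ᵥ z) := by
      rw [h1, hyz, toE_dotProduct, toE_dotProduct]
      exact dot_sym M z
    have hray := rayleigh M z
    have hyy : (inner ℝ (y u) (y u) : ℝ) = z ⬝ᵥ z := by rw [hyz, toE_dotProduct]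
    have hepos : (0:ℝ) < Real.exp (-(2 * μ) * u) := Real.exp_pos _
    rw [hsum, hyy]
    nlinarith [hray, hepos]
  have hgdiff : Differentiable ℝ g := fun u => (hg' u).differentiableAt
  have hanti : Antitone g := antitone_of_deriv_nonpos hgdiff hgmono
  have hle : g s ≤ g 0 := hanti hs
  have hy0 : y 0 = toE x := by
    rw [hydef]
    simp [NormedSpace.exp_zero]
  have hg0 : g 0 = ‖toE x‖ ^ 2 := by
    rw [hgdef]
    simp only [hy0, real_inner_self_eq_norm_sq, neg_mul, mul_zero, neg_zero, Real.exp_zero,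
      one_mul]
  have hys2 : Real.exp (-(2 * μ) * s) * ‖y s‖ ^ 2 ≤ ‖toE x‖ ^ 2 := by
    rw [← hg0]
    calc Real.exp (-(2 * μ) * s) * ‖y s‖ ^ 2 = g s := by
          show _ = Real.exp (-(2 * μ) * s) * (inner ℝ (y s) (y s) : ℝ)
          rw [real_inner_self_eq_norm_sq]
      _ ≤ g 0 := hle
  have h2 : ‖y s‖ ^ 2 ≤ Real.exp (2 * μ * s) * ‖toE x‖ ^ 2 := by
    have hepos : (0:ℝ) < Real.exp (-(2 * μ) * s) := Real.exp_pos _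
    calc ‖y s‖ ^ 2 = (Real.exp (-(2 * μ) * s))⁻¹ * (Real.exp (-(2 * μ) * s) * ‖y s‖ ^ 2) := by
          field_simp
      _ ≤ (Real.exp (-(2 * μ) * s))⁻¹ * ‖toE x‖ ^ 2 :=
          mul_le_mul_of_nonneg_left hys2 (by positivity)
      _ = Real.exp (2 * μ * s) * ‖toE x‖ ^ 2 := by
          rw [← Real.exp_neg]
          ring_nf
  have h3 : ‖y s‖ ^ 2 ≤ (Real.exp (μ * s) * ‖toE x‖) ^ 2 := by
    calc ‖y s‖ ^ 2 ≤ Real.exp (2 * μ * s) * ‖toE x‖ ^ 2 := h2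
      _ = (Real.exp (μ * s) * ‖toE x‖) ^ 2 := by
          rw [mul_pow, sq (Real.exp (μ * s)), ← Real.exp_add]
          ring_nf
  have h4 := Real.sqrt_le_sqrt h3
  rw [Real.sqrt_sq (norm_nonneg _), Real.sqrt_sq (by positivity)] at h4
  exact h4

lemma dot_mulVec_same {m k : ℕ} (M : Matrix (Fin m) (Fin k) ℝ) (a b : Fin k → ℝ) :
    (M *ᵥ a) ⬝ᵥ (M *ᵥ b) = ((Mᵀ * M) *ᵥ a) ⬝ᵥ b := by
  rw [Matrix.dotProduct_mulVec, ← Matrix.mulVec_transpose, Matrix.mulVec_mulVec]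

lemma norm_resid {n q d : ℕ} (V : Matrix (Fin n) (Fin q) ℝ) (Vp : Matrix (Fin n) (Fin d) ℝ)
    (hV : Vᵀ * V = 1) (hVp : Vpᵀ * Vp = 1) (hVVp : Vᵀ * Vp = 0)
    (C : Matrix (Fin d) (Fin q) ℝ) :
    ‖Vp * C * Vᵀ + (Vp * C * Vᵀ)ᵀ‖ ≤ ‖C‖ := by
  have hVpV : Vpᵀ * V = 0 := by
    have := congrArg Matrix.transpose hVVp
    simpa [Matrix.transpose_mul] using this
  set P := Vp * C * Vᵀ with hP
  refine opNorm_le_of _ (norm_nonneg C) fun x => ?_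
  set a := Vᵀ *ᵥ x with ha
  set b := Vpᵀ *ᵥ x with hb
  set u := P *ᵥ x with hu
  set w := Pᵀ *ᵥ x with hw
  -- cross terms vanish
  have hPP : P * P = 0 := by
    have h1 : P * P = Vp * (C * ((Vᵀ * Vp) * (C * Vᵀ))) := by
      simp [hP, Matrix.mul_assoc]
    rw [h1, hVVp]
    simp
  have hcross : u ⬝ᵥ w = 0 := by
    rw [hu, hw, Matrix.dotProduct_mulVec, Matrix.vecMul_transpose, Matrix.mulVec_mulVec, hPP]
    simp
  have hcross' : w ⬝ᵥ u = 0 := by rw [dotProduct_comm]; exact hcross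
  -- ‖u‖² ≤ ‖C‖² (a⬝a)
  have huu : u ⬝ᵥ u ≤ ‖C‖ ^ 2 * (a ⬝ᵥ a) := by
    have h1 : u = Vp *ᵥ (C *ᵥ a) := by
      rw [hu, hP, ha, Matrix.mulVec_mulVec, Matrix.mulVec_mulVec]
    have h2 : u ⬝ᵥ u = (C *ᵥ a) ⬝ᵥ (C *ᵥ a) := by
      rw [h1, dot_mulVec_same, hVp]
      simp
    rw [h2, ← toE_norm_sq, ← toE_norm_sq]
    calc ‖toE (C *ᵥ a)‖ ^ 2 ≤ (‖C‖ * ‖toE a‖) ^ 2 := by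
          have := norm_mulVec_le C a
          nlinarith [norm_nonneg (toE (C *ᵥ a)), norm_nonneg (toE a), norm_nonneg C]
      _ = ‖C‖ ^ 2 * ‖toE a‖ ^ 2 := by ring
  -- ‖w‖² ≤ ‖C‖² (b⬝b)
  have hww : w ⬝ᵥ w ≤ ‖C‖ ^ 2 * (b ⬝ᵥ b) := by
    have hCt : ‖Cᵀ‖ = ‖C‖ := by
      rw [← Matrix.conjTranspose_eq_transpose_of_trivial]
      exact Matrix.l2_opNorm_conjTranspose C
    have h1 : w = V *ᵥ (Cᵀ *ᵥ b) := by
      rw [hw, hP, hb]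
      simp [Matrix.transpose_mul, Matrix.mulVec_mulVec, Matrix.mul_assoc]
    have h2 : w ⬝ᵥ w = (Cᵀ *ᵥ b) ⬝ᵥ (Cᵀ *ᵥ b) := by
      rw [h1, dot_mulVec_same, hV]
      simp
    rw [h2, ← toE_norm_sq, ← toE_norm_sq]
    calc ‖toE (Cᵀ *ᵥ b)‖ ^ 2 ≤ (‖Cᵀ‖ * ‖toE b‖) ^ 2 := by
          have := norm_mulVec_le Cᵀ b
          nlinarith [norm_nonneg (toE (Cᵀ *ᵥ b)), norm_nonneg (toE b), norm_nonneg Cᵀ]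
      _ = ‖C‖ ^ 2 * ‖toE b‖ ^ 2 := by rw [hCt]; ring
  -- a⬝a + b⬝b ≤ x⬝x
  have hab : a ⬝ᵥ a + b ⬝ᵥ b ≤ x ⬝ᵥ x := by
    set Q := V * Vᵀ + Vp * Vpᵀ with hQdef
    have hQt : Qᵀ = Q := by
      simp [hQdef, Matrix.transpose_add, Matrix.transpose_mul]
    have hQQ : Q * Q = Q := by
      rw [hQdef]
      rw [Matrix.add_mul, Matrix.mul_add, Matrix.mul_add]
      have e1 : V * Vᵀ * (V * Vᵀ) = V * Vᵀ := by
        calc V * Vᵀ * (V * Vᵀ) = V * ((Vᵀ * V) * Vᵀ) := by simp [Matrix.mul_assoc]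
          _ = V * Vᵀ := by rw [hV]; simp
      have e2 : V * Vᵀ * (Vp * Vpᵀ) = 0 := by
        calc V * Vᵀ * (Vp * Vpᵀ) = V * ((Vᵀ * Vp) * Vpᵀ) := by simp [Matrix.mul_assoc]
          _ = 0 := by rw [hVVp]; simp
      have e3 : Vp * Vpᵀ * (V * Vᵀ) = 0 := by
        calc Vp * Vpᵀ * (V * Vᵀ) = Vp * ((Vpᵀ * V) * Vᵀ) := by simp [Matrix.mul_assoc]
          _ = 0 := by rw [hVpV]; simp
      have e4 : Vp * Vpᵀ * (Vp * Vpᵀ) = Vp * Vpᵀ := by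
        calc Vp * Vpᵀ * (Vp * Vpᵀ) = Vp * ((Vpᵀ * Vp) * Vpᵀ) := by simp [Matrix.mul_assoc]
          _ = Vp * Vpᵀ := by rw [hVp]; simp
      rw [e1, e2, e3, e4]
      simp
    have hsum : a ⬝ᵥ a + b ⬝ᵥ b = (Q *ᵥ x) ⬝ᵥ x := by
      rw [ha, hb, dot_mulVec_same, dot_mulVec_same, hQdef, Matrix.add_mulVec,
        add_dotProduct]
      simp
    have hQx : (Q *ᵥ x) ⬝ᵥ x ≤ x ⬝ᵥ x := by
      set z := Q *ᵥ x with hz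
      have hzz : z ⬝ᵥ z = (Q *ᵥ x) ⬝ᵥ x := by
        rw [hz, dot_mulVec_same, hQt, hQQ]
      have hinner : (Q *ᵥ x) ⬝ᵥ x = (inner ℝ (toE z) (toE x) : ℝ) := by
        rw [toE_dotProduct]
      have hcs : (inner ℝ (toE z) (toE x) : ℝ) ≤ ‖toE z‖ * ‖toE x‖ := real_inner_le_norm _ _
      have hz2 : ‖toE z‖ ^ 2 = (Q *ᵥ x) ⬝ᵥ x := by rw [toE_norm_sq]; exact hzz
      have hzle : ‖toE z‖ ≤ ‖toE x‖ := by
        rcases eq_or_lt_of_le (norm_nonneg (toE z)) with h0 | h0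
        · rw [← h0]; exact norm_nonneg _
        · have : ‖toE z‖ ^ 2 ≤ ‖toE z‖ * ‖toE x‖ := by rw [hz2, hinner]; exact hcs
          nlinarith
      calc (Q *ᵥ x) ⬝ᵥ x = ‖toE z‖ ^ 2 := hz2.symm
        _ ≤ ‖toE x‖ ^ 2 := by nlinarith [norm_nonneg (toE z), norm_nonneg (toE x)]
        _ = x ⬝ᵥ x := toE_norm_sq x
    rw [hsum]; exact hQx
  -- put it together
  have htot : ‖toE ((P + Pᵀ) *ᵥ x)‖ ^ 2 ≤ (‖C‖ * ‖toE x‖) ^ 2 := by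
    have hexp : ‖toE ((P + Pᵀ) *ᵥ x)‖ ^ 2 = u ⬝ᵥ u + w ⬝ᵥ w := by
      rw [toE_norm_sq, Matrix.add_mulVec, ← hu, ← hw, add_dotProduct,
        dotProduct_add, dotProduct_add, hcross, hcross']
      ring
    have hCx : ‖C‖ ^ 2 * (x ⬝ᵥ x) = (‖C‖ * ‖toE x‖) ^ 2 := by
      rw [← toE_norm_sq]; ring
    calc ‖toE ((P + Pᵀ) *ᵥ x)‖ ^ 2 = u ⬝ᵥ u + w ⬝ᵥ w := hexp
      _ ≤ ‖C‖ ^ 2 * (a ⬝ᵥ a) + ‖C‖ ^ 2 * (b ⬝ᵥ b) := add_le_add huu hww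
      _ = ‖C‖ ^ 2 * (a ⬝ᵥ a + b ⬝ᵥ b) := by ring
      _ ≤ ‖C‖ ^ 2 * (x ⬝ᵥ x) := mul_le_mul_of_nonneg_left hab (sq_nonneg _)
      _ = (‖C‖ * ‖toE x‖) ^ 2 := hCx
  have h4 := Real.sqrt_le_sqrt htot
  rw [Real.sqrt_sq (norm_nonneg _), Real.sqrt_sq (by positivity)] at h4
  exact h4

noncomputable def sandwichCLM {n q : ℕ} (V : Matrix (Fin n) (Fin q) ℝ) :
    Matrix (Fin q) (Fin q) ℝ →L[ℝ] Matrix (Fin n) (Fin n) ℝ :=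
  LinearMap.toContinuousLinearMap
    { toFun := fun M => V * M * Vᵀ
      map_add' := fun M N => by simp [Matrix.mul_add, Matrix.add_mul]
      map_smul' := fun r M => by simp [Matrix.mul_smul, Matrix.smul_mul] }

@[simp] lemma sandwichCLM_apply {n q : ℕ} (V : Matrix (Fin n) (Fin q) ℝ)
    (M : Matrix (Fin q) (Fin q) ℝ) : sandwichCLM V M = V * M * Vᵀ := rfl

noncomputable def residCLM {n q d : ℕ} (V : Matrix (Fin n) (Fin q) ℝ)
    (Vp : Matrix (Fin n) (Fin d) ℝ) (Tp : Matrix (Fin d) (Fin d) ℝ)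
    (E : Matrix (Fin q) (Fin d) ℝ) :
    Matrix (Fin q) (Fin q) ℝ →L[ℝ] Matrix (Fin n) (Fin n) ℝ :=
  LinearMap.toContinuousLinearMap
    { toFun := fun M => Vp * (Tp * (Eᵀ * M)) * Vᵀ + (Vp * (Tp * (Eᵀ * M)) * Vᵀ)ᵀ
      map_add' := fun M N => by
        simp [Matrix.mul_add, Matrix.add_mul, Matrix.transpose_add]
        abel
      map_smul' := fun r M => by
        simp [Matrix.mul_smul, Matrix.smul_mul, Matrix.transpose_smul, smul_add] }

@[simp] lemma residCLM_apply {n q d : ℕ} (V : Matrix (Fin n) (Fin q) ℝ)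
    (Vp : Matrix (Fin n) (Fin d) ℝ) (Tp : Matrix (Fin d) (Fin d) ℝ)
    (E : Matrix (Fin q) (Fin d) ℝ) (M : Matrix (Fin q) (Fin q) ℝ) :
    residCLM V Vp Tp E M = Vp * (Tp * (Eᵀ * M)) * Vᵀ + (Vp * (Tp * (Eᵀ * M)) * Vᵀ)ᵀ := rfl

set_option maxHeartbeats 2000000 in
theorem error_bound_stable
    (n s q d : ℕ) (hn : 0 < n) (hs : 0 < s) (hq : 0 < q) (hd : 0 < d) (hdq : d ≤ q)
    (t₀ Tf : ℝ) (ht : t₀ ≤ Tf)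
    (A : Matrix (Fin n) (Fin n) ℝ) (hstab : mu2 A < 0)
    (B : Matrix (Fin n) (Fin s) ℝ)
    (V : Matrix (Fin n) (Fin q) ℝ) (Vp : Matrix (Fin n) (Fin d) ℝ)
    (hV : Vᵀ * V = 1) (hVp : Vpᵀ * Vp = 1) (hVVp : Vᵀ * Vp = 0)
    (T : Matrix (Fin q) (Fin q) ℝ) (hT : T = Vᵀ * A * V)
    (Tp : Matrix (Fin d) (Fin d) ℝ)
    (E : Matrix (Fin q) (Fin d) ℝ)
    (hE : ∀ i j, E i j = if (i : ℕ) = q - d + (j : ℕ) then 1 else 0)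
    (hArnoldi : A * V = V * T + Vp * Tp * Eᵀ)
    (Bm : Matrix (Fin q) (Fin s) ℝ) (hBm : Bm = Vᵀ * B) (hB : B = V * Bm)
    (G : ℝ → Matrix (Fin q) (Fin q) ℝ)
    (hGsymm : ∀ t, (G t)ᵀ = G t)
    (hG : ∀ t, HasDerivAt G (T * G t + G t * Tᵀ + Bm * Bmᵀ) t)
    (hG0 : G t₀ = 0)
    (Xm : ℝ → Matrix (Fin n) (Fin n) ℝ) (hXm : ∀ t, Xm t = V * G t * Vᵀ)
    (X : ℝ → Matrix (Fin n) (Fin n) ℝ)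
    (hX : ∀ t, HasDerivAt X (A * X t + X t * Aᵀ + B * Bᵀ) t)
    (hX0 : X t₀ = 0) :
    ∀ t ∈ Icc t₀ Tf,
      ‖X t - Xm t‖ ≤
        ‖Tp‖ * (⨆ τ : Icc t₀ t, ‖Eᵀ * G (τ : ℝ)‖) *
          ((Real.exp (2 * (t - t₀) * mu2 A) - 1) / (2 * mu2 A)) := by
  have hXmfun : Xm = fun u => V * G u * Vᵀ := funext hXm
  subst hXmfun
  intro t htI
  obtain ⟨ht0, htf⟩ := htI
  set μ := mu2 A with hμdef
  -- continuity of G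
  have hGdiff : Differentiable ℝ G := fun u => (hG u).differentiableAt
  have hGcont : Continuous G := hGdiff.continuous
  -- the supremum K
  set K := ⨆ τ : Icc t₀ t, ‖Eᵀ * G (τ : ℝ)‖ with hKdef
  haveI : Nonempty (Icc t₀ t) := ⟨⟨t₀, le_refl _, ht0⟩⟩
  have hbdd : BddAbove (Set.range fun τ : Icc t₀ t => ‖Eᵀ * G (τ : ℝ)‖) := by
    haveI : CompactSpace (Icc t₀ t) := isCompact_iff_compactSpace.mp isCompact_Icc
    have hcont : Continuous fun τ : Icc t₀ t => ‖Eᵀ * G (τ : ℝ)‖ := by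
      exact (((lmulCLM (c := q) Eᵀ).continuous.comp hGcont).comp continuous_subtype_val).norm
    exact (isCompact_range hcont).bddAbove
  have hKle : ∀ u, u ∈ Icc t₀ t → ‖Eᵀ * G u‖ ≤ K := fun u hu => le_ciSup hbdd ⟨u, hu⟩
  have hK0 : 0 ≤ K := le_trans (norm_nonneg _) (hKle t₀ ⟨le_refl _, ht0⟩)
  -- residual
  set R : ℝ → Matrix (Fin n) (Fin n) ℝ := fun u => residCLM V Vp Tp E (G u) with hRdef
  -- error function and its derivative
  set Err : ℝ → Matrix (Fin n) (Fin n) ℝ := fun u => X u - V * G u * Vᵀ with hErrdef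
  have hVA : Vᵀ * Aᵀ = Tᵀ * Vᵀ + E * (Tpᵀ * Vpᵀ) := by
    have h := congrArg Matrix.transpose hArnoldi
    simpa [Matrix.transpose_mul, Matrix.transpose_add, Matrix.mul_assoc] using h
  have hresid : ∀ u, V * (T * G u + G u * Tᵀ + Bm * Bmᵀ) * Vᵀ + R u
      = A * (V * G u * Vᵀ) + (V * G u * Vᵀ) * Aᵀ + B * Bᵀ := by
    intro u
    have h1 : A * (V * G u * Vᵀ) = (V * T + Vp * Tp * Eᵀ) * (G u * Vᵀ) := by
      rw [← hArnoldi]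
      simp [Matrix.mul_assoc]
    have h2 : (V * G u * Vᵀ) * Aᵀ = (V * G u) * (Tᵀ * Vᵀ + E * (Tpᵀ * Vpᵀ)) := by
      rw [← hVA]
      simp [Matrix.mul_assoc]
    rw [h1, h2, hB, hRdef]
    simp only [residCLM_apply, Matrix.transpose_mul, Matrix.transpose_transpose, hGsymm,
      Matrix.mul_add, Matrix.add_mul, Matrix.mul_assoc]
    abel
  have hErr' : ∀ u, HasDerivAt Err (A * Err u + Err u * Aᵀ + R u) u := by
    intro u
    have hXm' : HasDerivAt (fun v => V * G v * Vᵀ)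
        (V * (T * G u + G u * Tᵀ + Bm * Bmᵀ) * Vᵀ) u := by
      have := (sandwichCLM V).hasFDerivAt.comp_hasDerivAt u (hG u)
      exact this
    have hsub := (hX u).sub hXm'
    have key : A * Err u + Err u * Aᵀ + R u
        = (A * X u + X u * Aᵀ + B * Bᵀ) - V * (T * G u + G u * Tᵀ + Bm * Bmᵀ) * Vᵀ := by
      rw [hErrdef]
      simp only [Matrix.mul_sub, Matrix.sub_mul]
      rw [eq_sub_iff_add_eq]
      calc A * X u - A * (V * G u * Vᵀ) + (X u * Aᵀ - V * G u * Vᵀ * Aᵀ) + R u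
            + V * (T * G u + G u * Tᵀ + Bm * Bmᵀ) * Vᵀ
          = A * X u + X u * Aᵀ
            + ((V * (T * G u + G u * Tᵀ + Bm * Bmᵀ) * Vᵀ + R u)
              - (A * (V * G u * Vᵀ) + V * G u * Vᵀ * Aᵀ)) := by abel
        _ = A * X u + X u * Aᵀ + B * Bᵀ := by
            rw [hresid u]
            abel
    rw [key]
    exact hsub
  -- propagator factors
  set p : ℝ → Matrix (Fin n) (Fin n) ℝ := fun u => NormedSpace.exp ((t - u) • A) with hpdef
  set r : ℝ → Matrix (Fin n) (Fin n) ℝ := fun u => NormedSpace.exp ((t - u) • Aᵀ) with hrdef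
  have hts : ∀ u : ℝ, HasDerivAt (fun v : ℝ => t - v) (-1) u := fun u => by
    simpa using (hasDerivAt_id u).const_sub t
  have hp' : ∀ u, HasDerivAt p (-(A * p u)) u := by
    intro u
    have h := hasDerivAt_exp_smul_const' (𝕂 := ℝ) A (t - u)
    have h2 := h.scomp u (hts u)
    simp only [neg_smul, one_smul] at h2
    exact h2
  have hr' : ∀ u, HasDerivAt r (-(r u * Aᵀ)) u := by
    intro u
    have h := hasDerivAt_exp_smul_const (𝕂 := ℝ) Aᵀ (t - u)
    have h2 := h.scomp u (hts u)
    simp only [neg_smul, one_smul] at h2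
    exact h2
  have hcp : ∀ u, A * p u = p u * A := fun u =>
    (((Commute.refl A).smul_right (t - u)).exp_right)
  have hcr : ∀ u, Aᵀ * r u = r u * Aᵀ := fun u =>
    (((Commute.refl Aᵀ).smul_right (t - u)).exp_right)
  -- the auxiliary function F and its derivative
  set F : ℝ → Matrix (Fin n) (Fin n) ℝ := fun u => p u * Err u * r u with hFdef
  have hF' : ∀ u, HasDerivAt F (p u * R u * r u) u := by
    intro u
    have h1 := ((hp' u).mul (hErr' u)).mul (hr' u)
    have e : (-(A * p u) * Err u + p u * (A * Err u + Err u * Aᵀ + R u)) * r u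
        + p u * Err u * -(r u * Aᵀ) = p u * R u * r u := by
      have hc1 : A * p u * Err u = p u * (A * Err u) := by
        rw [hcp u, Matrix.mul_assoc]
      have hc2 : Err u * Aᵀ * r u = Err u * (r u * Aᵀ) := by
        rw [Matrix.mul_assoc, hcr u]
      calc (-(A * p u) * Err u + p u * (A * Err u + Err u * Aᵀ + R u)) * r u
            + p u * Err u * -(r u * Aᵀ)
          = (-(A * p u * Err u) + (p u * (A * Err u) + p u * (Err u * Aᵀ) + p u * R u)) * r u
            - p u * (Err u * (r u * Aᵀ)) := by
            simp only [Matrix.mul_add, Matrix.add_mul, Matrix.neg_mul, Matrix.mul_neg,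
              Matrix.mul_assoc]
            abel
        _ = p u * (Err u * Aᵀ) * r u - p u * (Err u * (r u * Aᵀ)) + p u * R u * r u := by
            rw [hc1]
            simp only [Matrix.add_mul, Matrix.neg_mul]
            abel
        _ = p u * R u * r u := by
            rw [Matrix.mul_assoc (p u) (Err u * Aᵀ) (r u), Matrix.mul_assoc (Err u) Aᵀ (r u),
              hcr u]
            abel
    rw [← e]
    exact h1
  -- continuity of the integrand
  have hpcont : Continuous p := by
    have : Differentiable ℝ p := fun u => (hp' u).differentiableAt
    exact this.continuous
  have hrcont : Continuous r := by
    have : Differentiable ℝ r := fun u => (hr' u).differentiableAt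
    exact this.continuous
  have hRcont : Continuous R := (residCLM V Vp Tp E).continuous.comp hGcont
  have hIcont : Continuous fun u => p u * R u * r u :=
    ((hpcont.mul hRcont).mul hrcont)
  -- FTC
  have hFTC : ∫ u in t₀..t, p u * R u * r u = F t - F t₀ :=
    intervalIntegral.integral_eq_sub_of_hasDerivAt (fun u _ => hF' u)
      (hIcont.intervalIntegrable _ _)
  have hFt : F t = Err t := by
    rw [hFdef]
    simp [hpdef, hrdef, NormedSpace.exp_zero]
  have hFt0 : F t₀ = 0 := by
    have hErr0 : Err t₀ = 0 := by
      rw [hErrdef]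
      simp [hX0, hG0]
    rw [hFdef]
    simp [hErr0]
  have hErrInt : Err t = ∫ u in t₀..t, p u * R u * r u := by
    rw [hFTC, hFt, hFt0, sub_zero]
  -- pointwise bound on the integrand
  set c := ‖Tp‖ * K with hcdef
  have hc0 : 0 ≤ c := mul_nonneg (norm_nonneg _) hK0
  have hbound : ∀ u ∈ Set.Icc t₀ t, ‖p u * R u * r u‖ ≤ c * Real.exp (2 * μ * (t - u)) := by
    intro u hu
    have htu : 0 ≤ t - u := sub_nonneg.mpr hu.2
    have hpu : ‖p u‖ ≤ Real.exp (μ * (t - u)) := norm_exp_le A htu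
    have hru : ‖r u‖ ≤ Real.exp (μ * (t - u)) := by
      have h := norm_exp_le Aᵀ htu
      rwa [mu2_transpose] at h
    have hRu : ‖R u‖ ≤ c := by
      have h1 : ‖R u‖ ≤ ‖Tp * (Eᵀ * G u)‖ :=
        norm_resid V Vp hV hVp hVVp (Tp * (Eᵀ * G u))
      have h2 : ‖Tp * (Eᵀ * G u)‖ ≤ ‖Tp‖ * ‖Eᵀ * G u‖ := Matrix.l2_opNorm_mul _ _
      have h3 : ‖Eᵀ * G u‖ ≤ K := hKle u hu
      calc ‖R u‖ ≤ ‖Tp‖ * ‖Eᵀ * G u‖ := le_trans h1 h2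
        _ ≤ c := mul_le_mul_of_nonneg_left h3 (norm_nonneg _)
    calc ‖p u * R u * r u‖ ≤ ‖p u * R u‖ * ‖r u‖ := norm_mul_le _ _
      _ ≤ (‖p u‖ * ‖R u‖) * ‖r u‖ :=
          mul_le_mul_of_nonneg_right (norm_mul_le _ _) (norm_nonneg _)
      _ ≤ (Real.exp (μ * (t - u)) * c) * Real.exp (μ * (t - u)) := by
          apply mul_le_mul (mul_le_mul hpu hRu (norm_nonneg _) (Real.exp_nonneg _)) hru
            (norm_nonneg _) (by positivity)
      _ = c * Real.exp (2 * μ * (t - u)) := by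
          rw [show (2:ℝ) * μ * (t - u) = μ * (t - u) + μ * (t - u) by ring, Real.exp_add]
          ring
  -- the integral of the bound
  have h2μ : (2:ℝ) * μ < 0 := by linarith
  have hanti : ∀ u : ℝ, HasDerivAt (fun v => -(c * Real.exp (2 * μ * (t - v)) / (2 * μ)))
      (c * Real.exp (2 * μ * (t - u))) u := by
    intro u
    have h1 : HasDerivAt (fun v : ℝ => 2 * μ * (t - v)) (2 * μ * (-1)) u :=
      (hts u).const_mul (2 * μ)
    have h2 := h1.exp
    have h3 := ((h2.const_mul c).div_const (2 * μ)).neg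
    have hμne : μ ≠ 0 := ne_of_lt hstab
    refine h3.congr_deriv ?_
    field_simp [hμne]
  have hbc : Continuous fun u : ℝ => c * Real.exp (2 * μ * (t - u)) :=
    continuous_const.mul (Real.continuous_exp.comp (by fun_prop))
  have hIb : ∫ u in t₀..t, c * Real.exp (2 * μ * (t - u))
      = c * ((Real.exp (2 * μ * (t - t₀)) - 1) / (2 * μ)) := by
    rw [intervalIntegral.integral_eq_sub_of_hasDerivAt (fun u _ => hanti u)
      (hbc.intervalIntegrable _ _)]
    rw [sub_self]
    simp only [mul_zero, Real.exp_zero]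
    field_simp
    ring
  have hnn : 0 ≤ c * ((Real.exp (2 * μ * (t - t₀)) - 1) / (2 * μ)) := by
    apply mul_nonneg hc0
    rw [div_nonneg_iff]
    right
    constructor
    · have hle : 2 * μ * (t - t₀) ≤ 0 :=
        mul_nonpos_of_nonpos_of_nonneg (le_of_lt h2μ) (sub_nonneg.mpr ht0)
      have := Real.exp_le_one_iff.mpr hle
      linarith
    · exact le_of_lt h2μ
  have hae : ∀ᵐ u ∂MeasureTheory.volume.restrict (Set.uIoc t₀ t),
      ‖p u * R u * r u‖ ≤ c * Real.exp (2 * μ * (t - u)) := by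
    refine (MeasureTheory.ae_restrict_mem measurableSet_uIoc).mono fun u hu => ?_
    rw [Set.uIoc_of_le ht0] at hu
    exact hbound u ⟨le_of_lt hu.1, hu.2⟩
  have hfin : ‖Err t‖ ≤ c * ((Real.exp (2 * μ * (t - t₀)) - 1) / (2 * μ)) := by
    rw [hErrInt]
    have h := intervalIntegral.norm_integral_le_abs_of_norm_le hae (hbc.intervalIntegrable _ _)
    rw [hIb, abs_of_nonneg hnn] at h
    exact h
  calc ‖X t - V * G t * Vᵀ‖ = ‖Err t‖ := rfl
    _ ≤ c * ((Real.exp (2 * μ * (t - t₀)) - 1) / (2 * μ)) := hfin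
    _ = ‖Tp‖ * K * ((Real.exp (2 * (t - t₀) * μ) - 1) / (2 * μ)) := by
        rw [hcdef, show 2 * μ * (t - t₀) = 2 * (t - t₀) * μ by ring]
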